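/- In the randomized controlled trial model, let E = {C, T} with ν{C} = ν{T} = 1/2, let Q be a probability kernel from E to a measurable space (F, 𝓕) with F ⊆ ℝ≥0, with c_T = ∫_F y Q(T, dy) and c_C = ∫_F y Q(C, dy) finite, and let M = (κ, ν×Q) be the mixed binomial process on E×F with counting distribution κ = Dirac(n) for n ∈ ℕ, n ≥ 1 (so δ² = 0, c = n), built from i.i.d. pairs (X_i, Y_i) with X_i ~ ν and Y_i ~ Q(X_i, ·). Then for f_T(x,y) = 1_{{T}}(x)·y and f_C(x,y) = 1_{{C}}(x)·y (assumed square-integrable with respect to ν×Q), Cov(Mf_T, Mf_C) = −(n/4)·c_T·c_C, and consequently Cov((1/n)Mf_T, (1/n)Mf_C) = −c_T·c_C/(4n), which tends to 0 as n → ∞. -/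

import Mathlib

open MeasureTheory ProbabilityTheory Filter
open scoped ENNReal

/-- The covariance of two real-valued random variables:
`Cov(X, Y) = E[(X − E X)(Y − E Y)]`. -/
noncomputable def cov {Ω : Type*} [MeasurableSpace Ω] (X Y : Ω → ℝ) (μ : Measure Ω) : ℝ :=
  ∫ ω, (X ω - ∫ ω', X ω' ∂μ) * (Y ω - ∫ ω', Y ω' ∂μ) ∂μ

lemma memLp_mul_integrable {Ω : Type*} [MeasurableSpace Ω] {μ : Measure Ω}
    {f g : Ω → ℝ} (hf : MemLp f 2 μ) (hg : MemLp g 2 μ) :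
    Integrable (fun ω => f ω * g ω) μ := by
  have h : MemLp (g • f) 1 μ := hf.smul hg
  rw [← memLp_one_iff_integrable]
  have he : (g • f) = fun ω => f ω * g ω := by
    funext ω; simp [Pi.smul_apply, mul_comm]
  rwa [he] at h

lemma cov_eq_integral_mul_sub {Ω : Type*} [MeasurableSpace Ω] {μ : Measure Ω}
    [IsProbabilityMeasure μ] {X Y : Ω → ℝ} (hX : Integrable X μ) (hY : Integrable Y μ)
    (hXY : Integrable (fun ω => X ω * Y ω) μ) :
    cov X Y μ = (∫ ω, X ω * Y ω ∂μ) - (∫ ω, X ω ∂μ) * (∫ ω, Y ω ∂μ) := by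
  unfold cov
  set a := ∫ ω, X ω ∂μ with ha
  set b := ∫ ω, Y ω ∂μ with hb
  have h1 : Integrable (fun ω => X ω * Y ω - a * Y ω) μ := hXY.sub (hY.const_mul a)
  have h2 : Integrable (fun ω => b * X ω - a * b) μ := (hX.const_mul b).sub (integrable_const _)
  have h : ∀ ω, (X ω - a) * (Y ω - b) = (X ω * Y ω - a * Y ω) - (b * X ω - a * b) := by
    intro ω; ring
  simp only [h]
  rw [integral_sub h1 h2, integral_sub hXY (hY.const_mul a),
    integral_sub (hX.const_mul b) (integrable_const _),
    integral_const_mul, integral_const_mul, integral_const]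
  simp only [measure_univ, probReal_univ, ENNReal.toReal_one, one_smul, smul_eq_mul, one_mul, mul_one]
  ring

lemma cov_const_mul {Ω : Type*} [MeasurableSpace Ω] (μ : Measure Ω) (c : ℝ) (X Y : Ω → ℝ) :
    cov (fun ω => c * X ω) (fun ω => c * Y ω) μ = c ^ 2 * cov X Y μ := by
  unfold cov
  simp only [integral_const_mul]
  conv_rhs => rw [← integral_const_mul]
  congr 1; funext ω; ring


/-- In the RCT model with `E = {C, T}` (encoded as `Bool`, `T = true`,
`C = false`), equal assignment probabilities `ν{C} = ν{T} = 1/2`, a measurement kernel `Q`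
to nonnegative reals with group means `c_T, c_C`, and the binomial process
`M = (Dirac n, ν × Q)` built from iid pairs `(Xᵢ, Yᵢ) ~ ν ⊗ₘ Q`: for
`f_T(x,y) = 1_{T}(x)·y` and `f_C(x,y) = 1_{C}(x)·y`,
`Cov(Mf_T, Mf_C) = −(n/4)·c_T·c_C`, hence
`Cov((1/n)Mf_T, (1/n)Mf_C) = −c_T·c_C/(4n) → 0` as `n → ∞`. -/
theorem rct_binomial_covariance
    {Ω : Type*} [MeasurableSpace Ω] (P : Measure Ω) [IsProbabilityMeasure P]
    (ν : Measure Bool) [IsProbabilityMeasure ν]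
    -- equal group-assignment probabilities: ν{T} = ν{C} = 1/2 (T = true, C = false)
    (hν : ν {true} = 1/2 ∧ ν {false} = 1/2)
    (Q : Kernel Bool ℝ) [IsMarkovKernel Q]
    -- the measurement space is ℝ≥0: each Q(x, ·) is carried by the nonnegative reals
    (hQpos : ∀ x, ∀ᵐ y ∂(Q x), 0 ≤ y)
    -- group means c_T and c_C are finite
    (hQT : Integrable (fun y => y) (Q true)) (hQC : Integrable (fun y => y) (Q false))
    -- the iid points (Xᵢ, Yᵢ) with common law ν ⊗ₘ Q (counting variable is the constant n)
    (n : ℕ) (hn : 1 ≤ n) (Z : ℕ → Ω → Bool × ℝ)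
    (hZ : ∀ i, Measurable (Z i))
    (hZlaw : ∀ i, Measure.map (Z i) P = ν ⊗ₘ Q)
    (hZiid : iIndepFun Z P)
    -- f_T and f_C are square-integrable with respect to ν × Q
    (hfT2 : MemLp (fun p : Bool × ℝ => if p.1 then p.2 else 0) 2 (ν ⊗ₘ Q))
    (hfC2 : MemLp (fun p : Bool × ℝ => if p.1 then 0 else p.2) 2 (ν ⊗ₘ Q)) :
    cov (fun ω => ∑ i ∈ Finset.range n, if (Z i ω).1 then (Z i ω).2 else 0)
        (fun ω => ∑ i ∈ Finset.range n, if (Z i ω).1 then 0 else (Z i ω).2) P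
      = -((n : ℝ)/4) * (∫ y, y ∂(Q true)) * (∫ y, y ∂(Q false))
    ∧ cov (fun ω => (1/(n : ℝ)) * ∑ i ∈ Finset.range n, if (Z i ω).1 then (Z i ω).2 else 0)
          (fun ω => (1/(n : ℝ)) * ∑ i ∈ Finset.range n, if (Z i ω).1 then 0 else (Z i ω).2) P
      = -((∫ y, y ∂(Q true)) * (∫ y, y ∂(Q false))) / (4 * n)
    ∧ Tendsto (fun m : ℕ => -((∫ y, y ∂(Q true)) * (∫ y, y ∂(Q false))) / (4 * m))
        atTop (nhds 0) := by
  obtain ⟨hνT, hνF⟩ := hν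
  set cT := ∫ y, y ∂(Q true) with hcT
  set cC := ∫ y, y ∂(Q false) with hcC
  set fT : Bool × ℝ → ℝ := fun p => if p.1 then p.2 else 0 with hfTdef
  set fC : Bool × ℝ → ℝ := fun p => if p.1 then 0 else p.2 with hfCdef
  have hfTm : Measurable fT := by
    apply Measurable.ite _ measurable_snd measurable_const
    exact measurable_fst (measurableSet_singleton true)
  have hfCm : Measurable fC := by
    apply Measurable.ite _ measurable_const measurable_snd
    exact measurable_fst (measurableSet_singleton true)
  have hmp : ∀ i, MeasurePreserving (Z i) P (ν ⊗ₘ Q) := fun i => ⟨hZ i, hZlaw i⟩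
  have hU2 : ∀ i, MemLp (fun ω => fT (Z i ω)) 2 P :=
    fun i => hfT2.comp_measurePreserving (hmp i)
  have hV2 : ∀ i, MemLp (fun ω => fC (Z i ω)) 2 P :=
    fun i => hfC2.comp_measurePreserving (hmp i)
  have hTint : Integrable fT (ν ⊗ₘ Q) := hfT2.integrable one_le_two
  have hCint : Integrable fC (ν ⊗ₘ Q) := hfC2.integrable one_le_two
  have hhalf : (ν {true}).toReal = 1/2 ∧ (ν {false}).toReal = 1/2 := by
    constructor <;> [rw [hνT]; rw [hνF]] <;>
      simp [ENNReal.toReal_div]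
  -- integrals of fT, fC against ν ⊗ₘ Q
  have haT : ∫ p, fT p ∂(ν ⊗ₘ Q) = cT/2 := by
    rw [Measure.integral_compProd hTint]
    have h1 : ∀ x : Bool, (∫ y, fT (x, y) ∂(Q x)) = if x then cT else 0 := by
      intro x; cases x <;> simp [hfTdef, hcT]
    simp only [h1]
    rw [integral_fintype .of_finite]
    rw [Fintype.sum_bool]
    simp [Measure.real, hhalf.1]
    ring
  have haC : ∫ p, fC p ∂(ν ⊗ₘ Q) = cC/2 := by
    rw [Measure.integral_compProd hCint]
    have h1 : ∀ x : Bool, (∫ y, fC (x, y) ∂(Q x)) = if x then 0 else cC := by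
      intro x; cases x <;> simp [hfCdef, hcC]
    simp only [h1]
    rw [integral_fintype .of_finite]
    rw [Fintype.sum_bool]
    simp [Measure.real, hhalf.2]
    ring
  have hUa : ∀ i, ∫ ω, fT (Z i ω) ∂P = cT/2 := by
    intro i
    have := integral_map (μ := P) (hZ i).aemeasurable
      (f := fT) (by rw [hZlaw i]; exact hTint.1)
    rw [hZlaw i, haT] at this
    exact this.symm
  have hVa : ∀ i, ∫ ω, fC (Z i ω) ∂P = cC/2 := by
    intro i
    have := integral_map (μ := P) (hZ i).aemeasurable
      (f := fC) (by rw [hZlaw i]; exact hCint.1)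
    rw [hZlaw i, haC] at this
    exact this.symm
  -- individual products are integrable
  have hprodint : ∀ i j, Integrable (fun ω => fT (Z i ω) * fC (Z j ω)) P :=
    fun i j => memLp_mul_integrable (hU2 i) (hV2 j)
  -- cross expectations
  have hcross : ∀ i j, i ≠ j → ∫ ω, fT (Z i ω) * fC (Z j ω) ∂P = (cT/2) * (cC/2) := by
    intro i j hij
    have hind : IndepFun (fun ω => fT (Z i ω)) (fun ω => fC (Z j ω)) P :=
      (hZiid.indepFun hij).comp hfTm hfCm
    have := hind.integral_mul_eq_mul_integral ((hfTm.comp (hZ i)).aestronglyMeasurable)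
      ((hfCm.comp (hZ j)).aestronglyMeasurable)
    rw [hUa i, hVa j] at this
    exact this
  -- diagonal terms vanish
  have hdiag : ∀ i, ∫ ω, fT (Z i ω) * fC (Z i ω) ∂P = 0 := by
    intro i
    have h0 : ∀ ω, fT (Z i ω) * fC (Z i ω) = 0 := by
      intro ω
      rcases Bool.dichotomy (Z i ω).1 with h | h <;> simp [hfTdef, hfCdef, h]
    simp only [h0, integral_zero]
  set X : Ω → ℝ := fun ω => ∑ i ∈ Finset.range n, fT (Z i ω) with hXdef
  set Y : Ω → ℝ := fun ω => ∑ i ∈ Finset.range n, fC (Z i ω) with hYdef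
  have hXint : Integrable X P :=
    integrable_finset_sum _ (fun i _ => (hU2 i).integrable one_le_two)
  have hYint : Integrable Y P :=
    integrable_finset_sum _ (fun i _ => (hV2 i).integrable one_le_two)
  have hEX : ∫ ω, X ω ∂P = n * (cT/2) := by
    rw [hXdef, integral_finset_sum _ (fun i _ => (hU2 i).integrable one_le_two)]
    simp [hUa]
  have hEY : ∫ ω, Y ω ∂P = n * (cC/2) := by
    rw [hYdef, integral_finset_sum _ (fun i _ => (hV2 i).integrable one_le_two)]
    simp [hVa]
  have hXYint : Integrable (fun ω => X ω * Y ω) P := by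
    have hX2 := memLp_finset_sum' (Finset.range n) (fun i (_ : i ∈ Finset.range n) => hU2 i)
    have hY2 := memLp_finset_sum' (Finset.range n) (fun i (_ : i ∈ Finset.range n) => hV2 i)
    have heX : (∑ i ∈ Finset.range n, fun ω => fT (Z i ω)) = X := by
      funext ω; simp [hXdef]
    have heY : (∑ i ∈ Finset.range n, fun ω => fC (Z i ω)) = Y := by
      funext ω; simp [hYdef]
    rw [heX] at hX2; rw [heY] at hY2
    exact memLp_mul_integrable hX2 hY2
  have hEXY : ∫ ω, X ω * Y ω ∂P = ((n:ℝ)^2 - n) * ((cT/2) * (cC/2)) := by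
    have hexp : ∀ ω, X ω * Y ω =
        ∑ i ∈ Finset.range n, ∑ j ∈ Finset.range n, fT (Z i ω) * fC (Z j ω) := by
      intro ω; rw [hXdef, hYdef]; exact Finset.sum_mul_sum _ _ _ _
    simp only [hexp]
    rw [integral_finset_sum _ (fun i _ =>
      integrable_finset_sum _ (fun j _ => hprodint i j))]
    have hrow : ∀ i ∈ Finset.range n,
        (∑ j ∈ Finset.range n, ∫ ω, fT (Z i ω) * fC (Z j ω) ∂P)
          = (n:ℝ) * ((cT/2)*(cC/2)) - (cT/2)*(cC/2) := by
      intro i hi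
      have hterm : ∀ j, ∫ ω, fT (Z i ω) * fC (Z j ω) ∂P
          = (cT/2)*(cC/2) - (if i = j then (cT/2)*(cC/2) else 0) := by
        intro j
        by_cases h : i = j
        · subst h; simp [hdiag i]
        · simp [h, hcross i j h]
      simp only [hterm]
      rw [Finset.sum_sub_distrib, Finset.sum_const, Finset.card_range,
        Finset.sum_ite_eq, if_pos hi]
      simp [nsmul_eq_mul]
    have hrow' : ∀ i ∈ Finset.range n,
        ∫ ω, (∑ j ∈ Finset.range n, fT (Z i ω) * fC (Z j ω)) ∂P
          = (n:ℝ) * ((cT/2)*(cC/2)) - (cT/2)*(cC/2) := by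
      intro i hi
      rw [integral_finset_sum _ (fun j _ => hprodint i j)]
      exact hrow i hi
    rw [Finset.sum_congr rfl hrow', Finset.sum_const, Finset.card_range]
    simp only [nsmul_eq_mul]
    ring
  have hmain : cov X Y P = -((n : ℝ)/4) * cT * cC := by
    rw [cov_eq_integral_mul_sub hXint hYint hXYint, hEXY, hEX, hEY]
    ring
  refine ⟨hmain, ?_, ?_⟩
  · have h2 := cov_const_mul P (1/(n:ℝ)) X Y
    rw [hmain] at h2
    rw [h2]
    have hn0 : (n:ℝ) ≠ 0 := by positivity
    field_simp
  · have h := tendsto_const_div_atTop_nhds_zero_nat (-(cT * cC) / 4)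
    have heq : (fun m : ℕ => -(cT * cC) / (4 * m)) = fun m : ℕ => -(cT * cC) / 4 / m := by
      funext m; rw [div_div]
    rw [heq]
    exact h
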